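/- Let S and A be finite nonempty types, T : S → A → S → ℝ a transition kernel (T s a s' ≥ 0 and ∑_{s'} T s a s' = 1 for all s, a), R : S → A → S → ℝ a reward function, γ ∈ ℝ a discount factor, d : S → ℝ a potential function, and λ ∈ ℝ. If Q' : S → A → ℝ satisfies the Bellman optimality equation for the shaped reward R'(s,a,s') = R(s,a,s') + λ·(γ·d(s') − d(s)), then the function defined by (s,a) ↦ Q' s a + λ · d s satisfies the Bellman optimality equation for the original reward R. -/

import Mathlib

/-- Maximum of a real-valued function over a finite nonempty type,
taken as `Finset.max'` over `Finset.univ`. -/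
noncomputable def fmax {A : Type*} [Fintype A] [Nonempty A] (f : A → ℝ) : ℝ :=
  (Finset.univ.image f).max' (Finset.univ_nonempty.image f)

lemma fmax_le_iff {A : Type*} [Fintype A] [Nonempty A] (f : A → ℝ) (c : ℝ) :
    fmax f ≤ c ↔ ∀ a, f a ≤ c := by
  unfold fmax
  rw [Finset.max'_le_iff]
  constructor
  · intro h a; exact h _ (Finset.mem_image_of_mem f (Finset.mem_univ a))
  · intro h y hy; obtain ⟨a, -, rfl⟩ := Finset.mem_image.mp hy; exact h a

lemma le_fmax {A : Type*} [Fintype A] [Nonempty A] (f : A → ℝ) (a : A) :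
    f a ≤ fmax f :=
  Finset.le_max' _ _ (Finset.mem_image_of_mem f (Finset.mem_univ a))

lemma fmax_add_const {A : Type*} [Fintype A] [Nonempty A] (f : A → ℝ) (c : ℝ) :
    fmax (fun a => f a + c) = fmax f + c := by
  apply le_antisymm
  · rw [fmax_le_iff]; intro a; exact add_le_add_left (le_fmax f a) c
  · have : fmax f ≤ fmax (fun a => f a + c) - c := by
      rw [fmax_le_iff]; intro a
      have := le_fmax (fun a => f a + c) a; linarith
    linarith

/-- If `Q'` satisfies the Bellman optimality equation for the potential-based
shaped reward `R' s a s' = R s a s' + lam * (γ * d s' - d s)`, then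
`(s, a) ↦ Q' s a + lam * d s` satisfies the Bellman optimality equation for
the original reward `R`. -/
theorem unshifted_Q_satisfies_original_bellman
    {S A : Type*} [Fintype S] [Nonempty S] [Fintype A] [Nonempty A]
    (T : S → A → S → ℝ) (hT0 : ∀ s a s', 0 ≤ T s a s')
    (hT1 : ∀ s a, ∑ s', T s a s' = 1)
    (R : S → A → S → ℝ) (γ : ℝ) (d : S → ℝ) (lam : ℝ)
    (Q' : S → A → ℝ)
    (hQ' : ∀ s a, Q' s a =
      ∑ s', T s a s' * ((R s a s' + lam * (γ * d s' - d s)) +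
        γ * fmax (fun a' => Q' s' a'))) :
    ∀ s a, Q' s a + lam * d s =
      ∑ s', T s a s' * (R s a s' +
        γ * fmax (fun a' => Q' s' a' + lam * d s')) := by
  intro s a
  have hmax : ∀ s', fmax (fun a' => Q' s' a' + lam * d s')
      = fmax (fun a' => Q' s' a') + lam * d s' :=
    fun s' => fmax_add_const (fun a' => Q' s' a') (lam * d s')
  calc Q' s a + lam * d s
      = ∑ s', T s a s' * ((R s a s' + lam * (γ * d s' - d s)) +
          γ * fmax (fun a' => Q' s' a')) + lam * d s * ∑ s', T s a s' := by
        rw [hQ' s a, hT1 s a]; ring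
    _ = ∑ s', T s a s' * (R s a s' +
          γ * fmax (fun a' => Q' s' a' + lam * d s')) := by
        rw [Finset.mul_sum, ← Finset.sum_add_distrib]
        apply Finset.sum_congr rfl
        intro s' _
        rw [hmax s']
        ring
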